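/- For nonempty compact convex A, B ⊆ ℝⁿ and λ ≥ 0: A = B + B_λ if and only if h_A = h_B + λ on the unit sphere, and either condition implies B = A_{−λ} = {t : t + B_λ ⊆ A}. -/

import Mathlib

open scoped RealInnerProductSpace Pointwise

noncomputable section

/-- The support function of a subset of ℝⁿ. -/
def suppFn {n : ℕ} (A : Set (EuclideanSpace ℝ (Fin n)))
    (x : EuclideanSpace ℝ (Fin n)) : ℝ :=
  sSup ((fun a => ⟪a, x⟫) '' A)

/-- The inner parallel body of `A` at distance `lam`:
`A₋λ = {t | t + B_λ ⊆ A}`. -/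
def innerParallel {n : ℕ} (A : Set (EuclideanSpace ℝ (Fin n))) (lam : ℝ) :
    Set (EuclideanSpace ℝ (Fin n)) :=
  {t | ∀ b ∈ Metric.closedBall (0 : EuclideanSpace ℝ (Fin n)) lam, t + b ∈ A}

/-- The set of distances at which `A` has a regular inner parallel body. -/
def regSet {n : ℕ} (A : Set (EuclideanSpace ℝ (Fin n))) : Set ℝ :=
  {lam | 0 ≤ lam ∧ A = innerParallel A lam + Metric.closedBall 0 lam}

/-- A convex body is irreducible if it has no non-trivial regular inner
parallel body. -/
def IrredBody {n : ℕ} (B : Set (EuclideanSpace ℝ (Fin n))) : Prop :=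
  ∀ lam : ℝ, 0 ≤ lam →
    B = innerParallel B lam + Metric.closedBall 0 lam → lam = 0

section Aux

variable {n : ℕ}

lemma bddAbove_img {A : Set (EuclideanSpace ℝ (Fin n))} (hA : IsCompact A)
    (x : EuclideanSpace ℝ (Fin n)) : BddAbove ((fun a => ⟪a, x⟫) '' A) :=
  (hA.image (Continuous.inner continuous_id continuous_const)).bddAbove

lemma inner_le_suppFn {A : Set (EuclideanSpace ℝ (Fin n))} (hA : IsCompact A)
    {a : EuclideanSpace ℝ (Fin n)} (ha : a ∈ A) (x : EuclideanSpace ℝ (Fin n)) :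
    ⟪a, x⟫ ≤ suppFn A x :=
  le_csSup (bddAbove_img hA x) ⟨a, ha, rfl⟩

lemma suppFn_le {A : Set (EuclideanSpace ℝ (Fin n))} (hA : A.Nonempty)
    {x : EuclideanSpace ℝ (Fin n)} {c : ℝ} (h : ∀ a ∈ A, ⟪a, x⟫ ≤ c) :
    suppFn A x ≤ c :=
  csSup_le (hA.image _) (by rintro y ⟨a, ha, rfl⟩; exact h a ha)

lemma suppFn_add {A B : Set (EuclideanSpace ℝ (Fin n))} (hAne : A.Nonempty)
    (hAcomp : IsCompact A) (hBne : B.Nonempty) (hBcomp : IsCompact B)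
    (x : EuclideanSpace ℝ (Fin n)) :
    suppFn (A + B) x = suppFn A x + suppFn B x := by
  apply le_antisymm
  · apply suppFn_le (hAne.add hBne)
    rintro c hc
    rw [Set.mem_add] at hc
    obtain ⟨a, ha, b, hb, rfl⟩ := hc
    rw [inner_add_left]
    exact add_le_add (inner_le_suppFn hAcomp ha x) (inner_le_suppFn hBcomp hb x)
  · rw [← sub_nonneg, ← sub_sub]
    rw [sub_nonneg, ← sub_nonneg]
    have h1 : suppFn A x ≤ suppFn (A + B) x - suppFn B x := by
      apply suppFn_le hAne
      intro a ha
      rw [le_sub_iff_add_le, add_comm, ← le_sub_iff_add_le]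
      apply suppFn_le hBne
      intro b hb
      rw [le_sub_iff_add_le, add_comm, ← inner_add_left]
      exact inner_le_suppFn (hAcomp.add hBcomp) (Set.add_mem_add ha hb) x
    linarith

lemma suppFn_ball {lam : ℝ} (hlam : 0 ≤ lam) (x : EuclideanSpace ℝ (Fin n)) :
    suppFn (Metric.closedBall (0 : EuclideanSpace ℝ (Fin n)) lam) x = lam * ‖x‖ := by
  apply le_antisymm
  · apply suppFn_le ⟨0, by simp [hlam]⟩
    intro a ha
    rw [Metric.mem_closedBall, dist_zero_right] at ha
    calc ⟪a, x⟫ ≤ ‖a‖ * ‖x‖ := real_inner_le_norm a x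
    _ ≤ lam * ‖x‖ := mul_le_mul_of_nonneg_right ha (norm_nonneg x)
  · rcases eq_or_ne x 0 with rfl | hx
    · simpa using inner_le_suppFn (isCompact_closedBall _ _)
        (by simp [hlam] : (0 : EuclideanSpace ℝ (Fin n)) ∈ Metric.closedBall 0 lam) 0
    · have hxn : (0 : ℝ) < ‖x‖ := norm_pos_iff.2 hx
      have hmem : (lam / ‖x‖) • x ∈ Metric.closedBall (0 : EuclideanSpace ℝ (Fin n)) lam := by
        rw [Metric.mem_closedBall, dist_zero_right, norm_smul]
        simp [abs_of_nonneg (div_nonneg hlam hxn.le), abs_of_nonneg hlam, div_mul_cancel₀, hxn.ne']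
      have := inner_le_suppFn (isCompact_closedBall _ _) hmem x
      rw [real_inner_smul_left, real_inner_self_eq_norm_sq] at this
      calc lam * ‖x‖ = lam / ‖x‖ * (‖x‖ ^ 2) := by field_simp
      _ ≤ _ := this

lemma suppFn_smul {A : Set (EuclideanSpace ℝ (Fin n))} {c : ℝ} (hc : 0 ≤ c)
    (x : EuclideanSpace ℝ (Fin n)) : suppFn A (c • x) = c * suppFn A x := by
  unfold suppFn
  have h1 : (fun a => ⟪a, c • x⟫) '' A = c • ((fun a => ⟪a, x⟫) '' A) := by
    rw [← Set.image_smul, ← Set.image_comp]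
    apply Set.image_congr
    intro a _
    show ⟪a, c • x⟫ = c • ⟪a, x⟫
    rw [smul_eq_mul]
    exact real_inner_smul_right a x c
  rw [h1, Real.sSup_smul_of_nonneg hc, smul_eq_mul]

lemma subset_of_suppFn_le {A B : Set (EuclideanSpace ℝ (Fin n))}
    (hAcomp : IsCompact A) (hBne : B.Nonempty) (hBconv : Convex ℝ B)
    (hBcomp : IsCompact B)
    (h : ∀ x, suppFn A x ≤ suppFn B x) : A ⊆ B := by
  intro a ha
  by_contra hab
  obtain ⟨f, u, hfb, hfa⟩ :=
    geometric_hahn_banach_closed_point hBconv hBcomp.isClosed hab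
  set v := (InnerProductSpace.toDual ℝ (EuclideanSpace ℝ (Fin n))).symm f with hv
  have hvy : ∀ y, ⟪y, v⟫ = f y := by
    intro y
    rw [real_inner_comm]
    exact InnerProductSpace.toDual_symm_apply
  have h1 : suppFn B v ≤ u := suppFn_le hBne fun b hb => by
    rw [hvy]; exact (hfb b hb).le
  have h2 : f a ≤ suppFn A v := by rw [← hvy]; exact inner_le_suppFn hAcomp ha v
  have := h v
  linarith

lemma eq_of_suppFn {A B : Set (EuclideanSpace ℝ (Fin n))}
    (hAne : A.Nonempty) (hAcomp : IsCompact A) (hAconv : Convex ℝ A)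
    (hBne : B.Nonempty) (hBcomp : IsCompact B) (hBconv : Convex ℝ B)
    (h : ∀ x, suppFn A x = suppFn B x) : A = B :=
  Set.Subset.antisymm
    (subset_of_suppFn_le hAcomp hBne hBconv hBcomp fun x => (h x).le)
    (subset_of_suppFn_le hBcomp hAne hAconv hAcomp fun x => (h x).ge)

end Aux

theorem stmt16 {n : ℕ} (A B : Set (EuclideanSpace ℝ (Fin n)))
    (hAne : A.Nonempty) (hAcomp : IsCompact A) (hAconv : Convex ℝ A)
    (hBne : B.Nonempty) (hBcomp : IsCompact B) (hBconv : Convex ℝ B)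
    (lam : ℝ) (hlam : 0 ≤ lam) :
    (A = B + Metric.closedBall 0 lam ↔
      ∀ x : EuclideanSpace ℝ (Fin n), ‖x‖ = 1 → suppFn A x = suppFn B x + lam) ∧
    (A = B + Metric.closedBall 0 lam → B = innerParallel A lam) := by
  have hballne : (Metric.closedBall (0 : EuclideanSpace ℝ (Fin n)) lam).Nonempty :=
    ⟨0, by simp [hlam]⟩
  have hsum : ∀ x, suppFn (B + Metric.closedBall 0 lam) x = suppFn B x + lam * ‖x‖ := by
    intro x
    rw [suppFn_add hBne hBcomp hballne (isCompact_closedBall _ _), suppFn_ball hlam]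
  constructor
  · constructor
    · rintro rfl x hx
      rw [hsum, hx, mul_one]
    · intro h
      apply eq_of_suppFn hAne hAcomp hAconv
        (hBne.add hballne) (hBcomp.add (isCompact_closedBall _ _))
        (hBconv.add (convex_closedBall _ _))
      intro x
      rcases eq_or_ne x 0 with rfl | hx
      · rw [hsum]
        have h0 : ∀ (C : Set (EuclideanSpace ℝ (Fin n))), C.Nonempty →
            suppFn C 0 = 0 := by
          intro C ⟨c, hc⟩
          have : (fun a => ⟪a, (0 : EuclideanSpace ℝ (Fin n))⟫) '' C = {0} := by
            apply Set.Subset.antisymm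
            · rintro y ⟨a, _, rfl⟩; simp
            · rintro y rfl; exact ⟨c, hc, by simp⟩
          rw [suppFn, this, csSup_singleton]
        rw [h0 A hAne, h0 B hBne]
        simp
      · have hxn : (0 : ℝ) < ‖x‖ := norm_pos_iff.2 hx
        have hu : ‖(‖x‖⁻¹ • x : EuclideanSpace ℝ (Fin n))‖ = 1 := by
          rw [norm_smul]; simp [abs_of_nonneg (inv_nonneg.2 hxn.le), inv_mul_cancel₀ hxn.ne']
        have hrw : x = ‖x‖ • (‖x‖⁻¹ • x) := by
          rw [smul_smul, mul_inv_cancel₀ hxn.ne', one_smul]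
        rw [hsum]
        conv_lhs => rw [hrw]
        conv_rhs => rw [hrw]
        rw [suppFn_smul hxn.le, suppFn_smul hxn.le, h _ hu, ← hrw]
        ring
  · rintro rfl
    ext t
    constructor
    · intro hb b hbmem
      exact Set.add_mem_add hb hbmem
    · intro ht
      by_contra htb
      obtain ⟨f, u, hfb, hft⟩ :=
        geometric_hahn_banach_closed_point hBconv hBcomp.isClosed htb
      set v := (InnerProductSpace.toDual ℝ (EuclideanSpace ℝ (Fin n))).symm f with hv
      have hvy : ∀ y, ⟪y, v⟫ = f y := by
        intro y
        rw [real_inner_comm]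
        exact InnerProductSpace.toDual_symm_apply
      have hvne : v ≠ 0 := by
        intro h0
        obtain ⟨b, hb⟩ := hBne
        have h1 : f b = 0 := by rw [← hvy, h0, inner_zero_right]
        have h2 : f t = 0 := by rw [← hvy, h0, inner_zero_right]
        have := hfb b hb
        rw [h1] at this
        rw [h2] at hft
        linarith
      have hvn : (0 : ℝ) < ‖v‖ := norm_pos_iff.2 hvne
      set w : EuclideanSpace ℝ (Fin n) := (lam / ‖v‖) • v with hw
      have hwmem : w ∈ Metric.closedBall (0 : EuclideanSpace ℝ (Fin n)) lam := by
        rw [Metric.mem_closedBall, dist_zero_right, hw, norm_smul]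
        simp [abs_of_nonneg (div_nonneg hlam hvn.le), abs_of_nonneg hlam, div_mul_cancel₀, hvn.ne']
      have hmemA := ht w hwmem
      rw [Set.mem_add] at hmemA
      obtain ⟨b, hb, c, hc, hbc⟩ := hmemA
      have hfw : f w = lam * ‖v‖ := by
        rw [← hvy, hw, real_inner_smul_left, real_inner_self_eq_norm_sq]
        field_simp
      have hfc : f c ≤ lam * ‖v‖ := by
        rw [Metric.mem_closedBall, dist_zero_right] at hc
        rw [← hvy]
        calc ⟪c, v⟫ ≤ ‖c‖ * ‖v‖ := real_inner_le_norm c v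
        _ ≤ lam * ‖v‖ := mul_le_mul_of_nonneg_right hc hvn.le
      have heq : f t + f w = f b + f c := by
        rw [← map_add, ← map_add, hbc]
      have hfbu := hfb b hb
      rw [hfw] at heq
      linarith
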